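/- For every positive integer n, the n rational Beatty sequences S((2^n − 1)/2^{n−i}, −2^{i−1} + 1), for i = 1, 2, …, n, form a disjoint covering system of the integers, and their moduli (2^n − 1)/2^{n−i} are pairwise distinct. -/

import Mathlib

/-- The Beatty sequence `S(α, β) = {⌊α n + β⌋ : n ∈ ℤ}`. -/
def beattySet (α β : ℝ) : Set ℤ :=
  {m : ℤ | ∃ n : ℤ, m = ⌊α * n + β⌋}

private lemma floor_int_div_real (a : ℤ) (b : ℕ) : ⌊(a : ℝ) / (b : ℝ)⌋ = a / (b : ℤ) := by
  rw [show ((a:ℝ)/(b:ℝ)) = (((a / b : ℚ)) : ℝ) by push_cast; ring, Rat.floor_cast,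
    Rat.floor_intCast_div_natCast]

private lemma eq_ediv_iff {a b m : ℤ} (hb : 0 < b) :
    m = a / b ↔ b * m ≤ a ∧ a < b * (m + 1) := by
  have h1 := Int.le_ediv_iff_mul_le (a := m) (b := a) hb
  have h2 := Int.ediv_lt_iff_lt_mul (a := a) (b := m + 1) hb
  constructor
  · rintro rfl; constructor
    · nlinarith [h1.mp (le_refl (a/b))]
    · nlinarith [h2.mp (by omega : a / b < a / b + 1)]
  · rintro ⟨g1, g2⟩
    have := h1.mpr (by linarith)
    have := h2.mpr (by linarith)
    omega

/-- Uniqueness of the 2-adic valuation. -/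
private lemma pow2_odd_inj : ∀ i j : ℕ, ∀ r s : ℤ,
    2 ^ i * (2 * r + 1) = 2 ^ j * (2 * s + 1) → i = j := by
  intro i
  induction i with
  | zero =>
    intro j r s h
    cases j with
    | zero => rfl
    | succ j =>
      exfalso
      rw [pow_succ] at h
      have h2 : (2:ℤ) ∣ 2 ^ j * 2 * (2 * s + 1) := ⟨2 ^ j * (2 * s + 1), by ring⟩
      rw [← h] at h2
      obtain ⟨c, hc⟩ := h2
      simp only [pow_zero, one_mul] at hc
      omega
  | succ i ih =>
    intro j r s h
    cases j with
    | zero =>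
      exfalso
      rw [pow_succ] at h
      have h2 : (2:ℤ) ∣ 2 ^ i * 2 * (2 * r + 1) := ⟨2 ^ i * (2 * r + 1), by ring⟩
      rw [h] at h2
      obtain ⟨c, hc⟩ := h2
      simp only [pow_zero, one_mul] at hc
      omega
    | succ j =>
      have h2 : (2:ℤ) ^ i * (2 * r + 1) = 2 ^ j * (2 * s + 1) := by
        have h' := h
        rw [pow_succ, pow_succ] at h'
        exact mul_left_cancel₀ two_ne_zero (by linarith)
      exact congrArg Nat.succ (ih j r s h2)

/-- The arithmetic condition characterizing membership in the `i`-th sequence. -/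
private def Cond (n i : ℕ) (m : ℤ) : Prop :=
  ∃ r : ℤ, 0 ≤ r ∧ r < 2 ^ (n - 1 - i) ∧
    ((2:ℤ) ^ n - 1) ∣ (m - 1 + 2 ^ i * (2 * r + 1))

private lemma hpow_eq (n i : ℕ) (hi : i < n) :
    (2:ℤ) ^ (n - 1 - i) * (2 * 2 ^ i) = 2 ^ n := by
  rw [show (2:ℤ) * 2 ^ i = 2 ^ (i + 1) by rw [pow_succ]; ring, ← pow_add]
  congr 1
  omega

private lemma mem_iff (n i : ℕ) (hi : i < n) (m : ℤ) :
    m ∈ beattySet ((2 ^ n - 1 : ℝ) / (2 ^ (n - 1 - i) : ℝ)) (-(2 ^ i : ℝ) + 1) ↔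
      Cond n i m := by
  have hQne : ((2:ℝ)) ^ (n - 1 - i) ≠ 0 := by positivity
  have hpow := hpow_eq n i hi
  have hbZ : (((2 ^ (n - 1 - i) : ℕ)) : ℤ) = (2:ℤ) ^ (n - 1 - i) := by push_cast; ring
  have hb : (0:ℤ) < ((2 ^ (n - 1 - i) : ℕ) : ℤ) := by rw [hbZ]; positivity
  have hx : ∀ k : ℤ, (2 ^ n - 1 : ℝ) / (2 ^ (n - 1 - i) : ℝ) * k + (-(2 ^ i : ℝ) + 1)
      = ((((2 ^ n - 1) * k - (2 ^ i - 1) * 2 ^ (n - 1 - i) : ℤ)) : ℝ)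
        / (((2 ^ (n - 1 - i) : ℕ)) : ℝ) := by
    intro k
    push_cast
    field_simp
    ring
  constructor
  · rintro ⟨k, hk⟩
    rw [hx k, floor_int_div_real] at hk
    obtain ⟨g1, g2⟩ := (eq_ediv_iff hb).mp hk
    rw [hbZ] at g1 g2
    refine ⟨(2 ^ n - 1) * k - 2 ^ (n - 1 - i) * (m + 2 ^ i - 1), by linarith, by linarith,
      2 * 2 ^ i * k - (m + 2 ^ i - 1), ?_⟩
    linear_combination (-(m + 2 ^ i - 1)) * hpow
  · rintro ⟨r, hr0, hr1, s, hs⟩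
    refine ⟨2 ^ (n - 1 - i) * s - r, ?_⟩
    rw [hx _, floor_int_div_real]
    rw [eq_ediv_iff hb]
    rw [hbZ]
    have hpk : (2 ^ n - 1) * (2 ^ (n - 1 - i) * s - r)
        = 2 ^ (n - 1 - i) * (m + 2 ^ i - 1) + r := by
      linear_combination (-(2:ℤ) ^ (n - 1 - i)) * hs + r * hpow
    constructor <;> nlinarith [hpk]

private lemma cond_exists (n : ℕ) (hn : 0 < n) (m : ℤ) : ∃ i : ℕ, i < n ∧ Cond n i m := by
  set p : ℤ := 2 ^ n - 1 with hp_def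
  have hp : 0 < p := by
    have : (2:ℤ) ^ 1 ≤ 2 ^ n := pow_le_pow_right₀ (by norm_num) hn
    simp at this; omega
  set T : ℤ := (1 - m) % p with hT_def
  have hT0 : 0 ≤ T := Int.emod_nonneg _ (by omega)
  have hTp : T < p := Int.emod_lt_of_pos _ hp
  have hdvd : p ∣ (1 - m - T) := by
    rw [hT_def, Int.emod_def]
    exact ⟨(1 - m) / p, by ring⟩
  set t : ℤ := if T = 0 then p else T with ht_def
  have ht1 : 1 ≤ t := by rw [ht_def]; split <;> omega
  have htp : t ≤ p := by rw [ht_def]; split <;> omega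
  have htdvd : p ∣ (1 - m - t) := by
    rw [ht_def]; split
    · rename_i h
      have : p ∣ (1 - m) := by
        have := hdvd; rw [h] at this; simpa using this
      exact (by simpa using this.sub (dvd_refl p) : p ∣ (1 - m - p))
    · exact hdvd
  -- factor t = 2^i * (odd)
  set N : ℕ := t.toNat with hN_def
  have hN1 : 1 ≤ N := by omega
  have hNt : (N : ℤ) = t := Int.toNat_of_nonneg (by omega)
  have hNne : N ≠ 0 := by omega
  set i : ℕ := N.factorization 2 with hi_def
  set u : ℕ := N / 2 ^ i with hu_def
  have hfac : 2 ^ i * u = N := Nat.ordProj_mul_ordCompl_eq_self N 2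
  have hodd : ¬ 2 ∣ u := Nat.not_dvd_ordCompl Nat.prime_two hNne
  have hNlt : N < 2 ^ n := by
    have : t ≤ 2 ^ n - 1 := htp
    have h2 : ((2:ℤ)) ^ n = ((2 ^ n : ℕ) : ℤ) := by push_cast; ring
    omega
  have hile : 2 ^ i ≤ N := Nat.ordProj_le 2 hNne
  have hin : i < n := by
    have : 2 ^ i < 2 ^ n := lt_of_le_of_lt hile hNlt
    exact (Nat.pow_lt_pow_iff_right (by norm_num)).mp this
  have hu_pos : 0 < u := by
    rcases Nat.eq_zero_or_pos u with h | h
    · rw [h, mul_zero] at hfac; omega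
    · exact h
  have hu_odd : u % 2 = 1 := Nat.two_dvd_ne_zero.mp hodd
  set rn : ℕ := u / 2 with hrn_def
  have hu_eq : u = 2 * rn + 1 := by omega
  have hu_lt : u < 2 ^ (n - i) := by
    have h1 : 2 ^ i * u < 2 ^ i * 2 ^ (n - i) := by
      rw [← pow_add, show i + (n - i) = n by omega]
      omega
    exact Nat.lt_of_mul_lt_mul_left h1
  have hrn_lt : rn < 2 ^ (n - 1 - i) := by
    have h2 : (2:ℕ) ^ (n - i) = 2 * 2 ^ (n - 1 - i) := by
      rw [← pow_succ', show (n - 1 - i) + 1 = n - i by omega]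
    omega
  refine ⟨i, hin, (rn : ℤ), by positivity, by exact_mod_cast hrn_lt, ?_⟩
  have hcast : (2:ℤ) ^ i * (2 * (rn : ℤ) + 1) = (N : ℤ) := by
    rw [← hfac, hu_eq]; push_cast; ring
  have : m - 1 + 2 ^ i * (2 * (rn : ℤ) + 1) = -(1 - m - t) := by
    rw [hcast, hNt]; ring
  rw [this]
  exact htdvd.neg_right

private lemma cond_unique (n : ℕ) (hn : 0 < n) (m : ℤ) {i j : ℕ} (hi : i < n) (hj : j < n)
    (ci : Cond n i m) (cj : Cond n j m) : i = j := by
  obtain ⟨r, hr0, hr1, hdi⟩ := ci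
  obtain ⟨s, hs0, hs1, hdj⟩ := cj
  set p : ℤ := 2 ^ n - 1 with hp_def
  have hp : 0 < p := by
    have : (2:ℤ) ^ 1 ≤ 2 ^ n := pow_le_pow_right₀ (by norm_num) hn
    simp at this; omega
  have hpi := hpow_eq n i hi
  have hpj := hpow_eq n j hj
  have hti1 : 1 ≤ (2:ℤ) ^ i * (2 * r + 1) := by
    have h1 : (1:ℤ) ≤ 2 ^ i := one_le_pow₀ (by norm_num)
    nlinarith
  have htj1 : 1 ≤ (2:ℤ) ^ j * (2 * s + 1) := by
    have h1 : (1:ℤ) ≤ 2 ^ j := one_le_pow₀ (by norm_num)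
    nlinarith
  have htip : (2:ℤ) ^ i * (2 * r + 1) ≤ p := by
    have h1 : (1:ℤ) ≤ 2 ^ i := one_le_pow₀ (by norm_num)
    have h2 : (2:ℤ) ^ i * (2 * r + 1) ≤ 2 ^ i * (2 * 2 ^ (n - 1 - i) - 1) := by nlinarith
    have h3 : (2:ℤ) ^ i * (2 * 2 ^ (n - 1 - i) - 1) = 2 ^ n - 2 ^ i := by
      linear_combination hpi
    omega
  have htjp : (2:ℤ) ^ j * (2 * s + 1) ≤ p := by
    have h1 : (1:ℤ) ≤ 2 ^ j := one_le_pow₀ (by norm_num)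
    have h2 : (2:ℤ) ^ j * (2 * s + 1) ≤ 2 ^ j * (2 * 2 ^ (n - 1 - j) - 1) := by nlinarith
    have h3 : (2:ℤ) ^ j * (2 * 2 ^ (n - 1 - j) - 1) = 2 ^ n - 2 ^ j := by
      linear_combination hpj
    omega
  have hdd : p ∣ (2 ^ i * (2 * r + 1) - 2 ^ j * (2 * s + 1)) := by
    have h := hdi.sub hdj
    have e : (m - 1 + 2 ^ i * (2 * r + 1)) - (m - 1 + 2 ^ j * (2 * s + 1))
        = 2 ^ i * (2 * r + 1) - 2 ^ j * (2 * s + 1) := by ring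
    rwa [e] at h
  have heq : (2:ℤ) ^ i * (2 * r + 1) = 2 ^ j * (2 * s + 1) := by
    have h0 := Int.eq_zero_of_abs_lt_dvd hdd (by rw [abs_sub_lt_iff]; omega)
    omega
  exact pow2_odd_inj i j r s heq

theorem fraenkel_system (n : ℕ) (hn : 0 < n) :
    (∀ m : ℤ, ∃! i : Fin n,
      m ∈ beattySet ((2 ^ n - 1 : ℝ) / (2 ^ (n - 1 - (i : ℕ)) : ℝ))
        (-(2 ^ (i : ℕ) : ℝ) + 1)) ∧
    Function.Injective
      (fun i : Fin n => ((2 ^ n - 1 : ℝ) / (2 ^ (n - 1 - (i : ℕ)) : ℝ))) := by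
  constructor
  · intro m
    obtain ⟨i, hin, hc⟩ := cond_exists n hn m
    refine ⟨⟨i, hin⟩, (mem_iff n i hin m).mpr hc, ?_⟩
    intro j hj
    ext
    exact cond_unique n hn m j.isLt hin ((mem_iff n j j.isLt m).mp hj) hc
  · intro i j h
    simp only at h
    have h2n : (2:ℝ) ^ n - 1 ≠ 0 := by
      have : (2:ℝ) ^ 1 ≤ 2 ^ n := pow_le_pow_right₀ (by norm_num) hn
      simp at this; nlinarith
    have hi := i.isLt
    have hj := j.isLt
    field_simp at h
    have h' := pow_right_injective₀ (by norm_num : (0:ℝ) < 2) (by norm_num) h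
    ext; omega
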